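/- The map S defined on generators of G(A,B) by S(u) = D^{-1} A^{-1} u^t A (entrywise as matrices) and S(D^{±1}) = D^{∓1} extends to a well-defined algebra anti-homomorphism S: G(A,B) → G(A,B), and with the standard coalgebra structure it is an antipode, making G(A,B) a Hopf algebra. -/

import Mathlib

open Matrix

/-- Generators of the algebra `G(A,B)`: the `u i j`, `𝔻`, and `𝔻⁻¹`. -/
inductive GABgen (n : ℕ) : Type
  | u : Fin n → Fin n → GABgen n
  | D : GABgen n
  | Dinv : GABgen n

/-- The matrix of generators `u` inside the free algebra. -/
noncomputable def GABu (k : Type*) [Field k] (n : ℕ) :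
    Matrix (Fin n) (Fin n) (FreeAlgebra k (GABgen n)) :=
  fun i j => FreeAlgebra.ι k (GABgen.u i j)

/-- The defining relations of `G(A,B)`: `uᵀ A u = A 𝔻`, `u B uᵀ = B 𝔻`,
`𝔻 𝔻⁻¹ = 1 = 𝔻⁻¹ 𝔻`. -/
inductive GABrel (k : Type*) [Field k] {n : ℕ} (A B : Matrix (Fin n) (Fin n) k) :
    FreeAlgebra k (GABgen n) → FreeAlgebra k (GABgen n) → Prop
  | relA (i j : Fin n) : GABrel k A B
      ((((GABu k n)ᵀ * A.map (algebraMap k (FreeAlgebra k (GABgen n))) * GABu k n)) i j)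
      (algebraMap k (FreeAlgebra k (GABgen n)) (A i j) * FreeAlgebra.ι k GABgen.D)
  | relB (i j : Fin n) : GABrel k A B
      (((GABu k n * B.map (algebraMap k (FreeAlgebra k (GABgen n))) * (GABu k n)ᵀ)) i j)
      (algebraMap k (FreeAlgebra k (GABgen n)) (B i j) * FreeAlgebra.ι k GABgen.D)
  | relD : GABrel k A B (FreeAlgebra.ι k GABgen.D * FreeAlgebra.ι k GABgen.Dinv) 1
  | relD' : GABrel k A B (FreeAlgebra.ι k GABgen.Dinv * FreeAlgebra.ι k GABgen.D) 1

/-- The algebra `G(A,B)`, presented by generators `u i j`, `𝔻`, `𝔻⁻¹` and the relations above. -/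
noncomputable def GAB (k : Type*) [Field k] {n : ℕ} (A B : Matrix (Fin n) (Fin n) k) : Type _ :=
  RingQuot (GABrel k A B)

noncomputable instance (k : Type*) [Field k] {n : ℕ} (A B : Matrix (Fin n) (Fin n) k) :
    Ring (GAB k A B) := by unfold GAB; infer_instance

noncomputable instance (k : Type*) [Field k] {n : ℕ} (A B : Matrix (Fin n) (Fin n) k) :
    Algebra k (GAB k A B) := by unfold GAB; infer_instance

/-- The generators `u i j` of `G(A,B)`. -/
noncomputable def GABU (k : Type*) [Field k] {n : ℕ} (A B : Matrix (Fin n) (Fin n) k)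
    (i j : Fin n) : GAB k A B :=
  RingQuot.mkAlgHom k (GABrel k A B) (FreeAlgebra.ι k (GABgen.u i j))

/-- The generator `𝔻` of `G(A,B)`. -/
noncomputable def GABD (k : Type*) [Field k] {n : ℕ} (A B : Matrix (Fin n) (Fin n) k) :
    GAB k A B :=
  RingQuot.mkAlgHom k (GABrel k A B) (FreeAlgebra.ι k GABgen.D)

/-- The generator `𝔻⁻¹` of `G(A,B)`. -/
noncomputable def GABDinv (k : Type*) [Field k] {n : ℕ} (A B : Matrix (Fin n) (Fin n) k) :
    GAB k A B :=
  RingQuot.mkAlgHom k (GABrel k A B) (FreeAlgebra.ι k GABgen.Dinv)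

open scoped TensorProduct

/-- The matrix of generators of `G(A,B)` regarded as elements of `G(A,B)`. -/
noncomputable def GABumat (k : Type*) [Field k] {n : ℕ} (A B : Matrix (Fin n) (Fin n) k) :
    Matrix (Fin n) (Fin n) (GAB k A B) := fun i j => GABU k A B i j

open MulOpposite

section MatrixAux

variable {k R : Type*} [CommSemiring k] [Ring R] [Algebra k R] {n : ℕ}

lemma aux_transpose_map_mul (P : Matrix (Fin n) (Fin n) k) (M : Matrix (Fin n) (Fin n) R) :
    (P.map (algebraMap k R) * M)ᵀ = Mᵀ * Pᵀ.map (algebraMap k R) := by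
  ext i j
  simp only [Matrix.transpose_apply, Matrix.mul_apply, Matrix.map_apply]
  exact Finset.sum_congr rfl fun c _ => (Algebra.commutes (P j c) (M c i)).symm ▸ rfl

lemma aux_transpose_mul_map (M : Matrix (Fin n) (Fin n) R) (P : Matrix (Fin n) (Fin n) k) :
    (M * P.map (algebraMap k R))ᵀ = Pᵀ.map (algebraMap k R) * Mᵀ := by
  ext i j
  simp only [Matrix.transpose_apply, Matrix.mul_apply, Matrix.map_apply]
  exact Finset.sum_congr rfl fun c _ => (Algebra.commutes (P c i) (M j c)).symm

lemma aux_opsmul_mul_map (x : R) (M : Matrix (Fin n) (Fin n) R) (P : Matrix (Fin n) (Fin n) k) :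
    (op x • M) * P.map (algebraMap k R) = op x • (M * P.map (algebraMap k R)) := by
  ext i j
  simp only [Matrix.mul_apply, Matrix.smul_apply, Matrix.map_apply, op_smul_eq_mul,
    Finset.sum_mul]
  exact Finset.sum_congr rfl fun c _ => by
    rw [mul_assoc, mul_assoc, Algebra.commutes (P c j) x]

lemma aux_smul_map (x : R) (P : Matrix (Fin n) (Fin n) k) :
    x • P.map (algebraMap k R) = op x • P.map (algebraMap k R) := by
  ext i j
  simp only [Matrix.smul_apply, Matrix.map_apply, op_smul_eq_mul, smul_eq_mul,
    Algebra.commutes]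

lemma aux_smul_opsmul_one (x y : R) (h : x * y = 1) :
    x • op y • (1 : Matrix (Fin n) (Fin n) R) = 1 := by
  ext i j
  simp only [Matrix.smul_apply, Matrix.one_apply, op_smul_eq_mul, smul_eq_mul]
  split <;> simp [h]

lemma aux_opsmul_opsmul_one (x y : R) (h : y * x = 1) :
    op x • op y • (1 : Matrix (Fin n) (Fin n) R) = 1 := by
  ext i j
  simp only [Matrix.smul_apply, Matrix.one_apply, op_smul_eq_mul]
  split <;> simp [h]

end MatrixAux

section GABrels

variable {k : Type*} [Field k] {n : ℕ} (A B : Matrix (Fin n) (Fin n) k)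

lemma gab_relA (i j : Fin n) :
    ((GABumat k A B)ᵀ * A.map (algebraMap k (GAB k A B)) * GABumat k A B) i j
      = algebraMap k (GAB k A B) (A i j) * GABD k A B := by
  have h := RingQuot.mkAlgHom_rel k (GABrel.relA (k := k) (A := A) (B := B) i j)
  simp only [Matrix.mul_apply, Matrix.transpose_apply, Matrix.map_apply, map_sum,
    _root_.map_mul, AlgHom.commutes, GABu] at h
  simp only [Matrix.mul_apply, Matrix.transpose_apply, Matrix.map_apply, GABumat, GABU,
    GABD]; exact h

lemma gab_relB (i j : Fin n) :
    (GABumat k A B * B.map (algebraMap k (GAB k A B)) * (GABumat k A B)ᵀ) i j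
      = algebraMap k (GAB k A B) (B i j) * GABD k A B := by
  have h := RingQuot.mkAlgHom_rel k (GABrel.relB (k := k) (A := A) (B := B) i j)
  simp only [Matrix.mul_apply, Matrix.transpose_apply, Matrix.map_apply, map_sum,
    _root_.map_mul, AlgHom.commutes, GABu] at h
  simp only [Matrix.mul_apply, Matrix.transpose_apply, Matrix.map_apply, GABumat, GABU,
    GABD]; exact h

lemma gab_DDinv : GABD k A B * GABDinv k A B = 1 := by
  have h := RingQuot.mkAlgHom_rel k (GABrel.relD (k := k) (A := A) (B := B))
  simp only [_root_.map_mul, _root_.map_one] at h; exact h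

lemma gab_DinvD : GABDinv k A B * GABD k A B = 1 := by
  have h := RingQuot.mkAlgHom_rel k (GABrel.relD' (k := k) (A := A) (B := B))
  simp only [_root_.map_mul, _root_.map_one] at h; exact h

lemma gab_relA' :
    (GABumat k A B)ᵀ * A.map (algebraMap k (GAB k A B)) * GABumat k A B
      = op (GABD k A B) • A.map (algebraMap k (GAB k A B)) := by
  ext i j
  simp only [Matrix.smul_apply, Matrix.map_apply, op_smul_eq_mul]
  rw [gab_relA, Algebra.commutes]

lemma gab_relB' :
    GABumat k A B * B.map (algebraMap k (GAB k A B)) * (GABumat k A B)ᵀ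
      = op (GABD k A B) • B.map (algebraMap k (GAB k A B)) := by
  ext i j
  simp only [Matrix.smul_apply, Matrix.map_apply, op_smul_eq_mul]
  rw [gab_relB, Algebra.commutes]

end GABrels
section GABmat

variable {k : Type*} [Field k] {n : ℕ} (A B : Matrix (Fin n) (Fin n) k)

/-- The matrix `S(u) = 𝔻⁻¹ A⁻¹ uᵀ A` of antipode values. -/
noncomputable def GABV : Matrix (Fin n) (Fin n) (GAB k A B) :=
  GABDinv k A B • (A⁻¹.map (algebraMap k (GAB k A B)) * (GABumat k A B)ᵀ *
      A.map (algebraMap k (GAB k A B)))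

/-- The matrix `B uᵀ B⁻¹ 𝔻⁻¹`, a right inverse of `u`. -/
noncomputable def GABW : Matrix (Fin n) (Fin n) (GAB k A B) :=
  op (GABDinv k A B) • (B.map (algebraMap k (GAB k A B)) * (GABumat k A B)ᵀ *
      B⁻¹.map (algebraMap k (GAB k A B)))

variable {A B}

lemma gab_mapAinvA (hA : IsUnit A) :
    A⁻¹.map (algebraMap k (GAB k A B)) * A.map (algebraMap k (GAB k A B)) = 1 := by
  rw [← Matrix.map_mul (f := algebraMap k (GAB k A B)), Matrix.nonsing_inv_mul A ((Matrix.isUnit_iff_isUnit_det A).mp hA),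
    Matrix.map_one _ (map_zero _) (map_one _)]

lemma gab_mapAT (hA : IsUnit A) :
    (A⁻¹)ᵀ.map (algebraMap k (GAB k A B)) * Aᵀ.map (algebraMap k (GAB k A B)) = 1 := by
  rw [← Matrix.map_mul (f := algebraMap k (GAB k A B)), ← Matrix.transpose_mul,
    Matrix.mul_nonsing_inv A ((Matrix.isUnit_iff_isUnit_det A).mp hA), Matrix.transpose_one,
    Matrix.map_one _ (map_zero _) (map_one _)]

lemma gab_mapBBinv (hB : IsUnit B) :
    B.map (algebraMap k (GAB k A B)) * B⁻¹.map (algebraMap k (GAB k A B)) = 1 := by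
  rw [← Matrix.map_mul (f := algebraMap k (GAB k A B)), Matrix.mul_nonsing_inv B ((Matrix.isUnit_iff_isUnit_det B).mp hB),
    Matrix.map_one _ (map_zero _) (map_one _)]

lemma gab_mapBT (hB : IsUnit B) :
    Bᵀ.map (algebraMap k (GAB k A B)) * (B⁻¹)ᵀ.map (algebraMap k (GAB k A B)) = 1 := by
  rw [← Matrix.map_mul (f := algebraMap k (GAB k A B)), ← Matrix.transpose_mul,
    Matrix.nonsing_inv_mul B ((Matrix.isUnit_iff_isUnit_det B).mp hB), Matrix.transpose_one,
    Matrix.map_one _ (map_zero _) (map_one _)]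

lemma gab_VU (hA : IsUnit A) : GABV A B * GABumat k A B = 1 := by
  rw [GABV, Matrix.smul_mul, mul_assoc (A⁻¹.map _) ((GABumat k A B)ᵀ),
    mul_assoc (A⁻¹.map _), gab_relA', Matrix.mul_smul, gab_mapAinvA hA]
  exact aux_smul_opsmul_one _ _ (gab_DinvD A B)

lemma gab_UW (hB : IsUnit B) : GABumat k A B * GABW A B = 1 := by
  rw [GABW, Matrix.mul_smul, ← mul_assoc, ← mul_assoc, gab_relB', aux_opsmul_mul_map,
    gab_mapBBinv hB]
  exact aux_opsmul_opsmul_one _ _ (gab_DDinv A B)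

lemma gab_VW (hA : IsUnit A) (hB : IsUnit B) : GABV A B = GABW A B := by
  calc GABV A B = GABV A B * (GABumat k A B * GABW A B) := by rw [gab_UW hB, mul_one]
    _ = GABV A B * GABumat k A B * GABW A B := by rw [mul_assoc]
    _ = GABW A B := by rw [gab_VU hA, one_mul]

lemma gab_UV (hA : IsUnit A) (hB : IsUnit B) : GABumat k A B * GABV A B = 1 := by
  rw [gab_VW hA hB]; exact gab_UW hB

lemma gab_VT :
    (GABV A B)ᵀ = GABDinv k A B •
      (Aᵀ.map (algebraMap k (GAB k A B)) * GABumat k A B *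
        (A⁻¹)ᵀ.map (algebraMap k (GAB k A B))) := by
  rw [GABV, Matrix.transpose_smul, mul_assoc, aux_transpose_map_mul,
    aux_transpose_mul_map, Matrix.transpose_transpose]

lemma gab_WT :
    (GABW A B)ᵀ = op (GABDinv k A B) •
      ((B⁻¹)ᵀ.map (algebraMap k (GAB k A B)) * GABumat k A B *
        Bᵀ.map (algebraMap k (GAB k A B))) := by
  rw [GABW, Matrix.transpose_smul, aux_transpose_mul_map, aux_transpose_map_mul,
    Matrix.transpose_transpose, mul_assoc]

lemma gab_T7 (hA : IsUnit A) (hB : IsUnit B) :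
    (GABV A B)ᵀ * Aᵀ.map (algebraMap k (GAB k A B)) * GABV A B
      = op (GABDinv k A B) • Aᵀ.map (algebraMap k (GAB k A B)) := by
  rw [gab_VT, Matrix.smul_mul, Matrix.smul_mul, mul_assoc (Aᵀ.map _ * GABumat k A B),
    gab_mapAT hA, mul_one, mul_assoc, gab_UV hA hB, mul_one, aux_smul_map]

lemma gab_T8 (hA : IsUnit A) (hB : IsUnit B) :
    GABV A B * Bᵀ.map (algebraMap k (GAB k A B)) * (GABV A B)ᵀ
      = op (GABDinv k A B) • Bᵀ.map (algebraMap k (GAB k A B)) := by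
  rw [gab_VW hA hB, gab_WT, ← gab_VW hA hB, Matrix.mul_smul]
  rw [show GABV A B * Bᵀ.map (algebraMap k (GAB k A B)) *
      ((B⁻¹)ᵀ.map (algebraMap k (GAB k A B)) * GABumat k A B *
        Bᵀ.map (algebraMap k (GAB k A B)))
    = GABV A B * (Bᵀ.map (algebraMap k (GAB k A B)) * (B⁻¹)ᵀ.map (algebraMap k (GAB k A B)))
        * GABumat k A B * Bᵀ.map (algebraMap k (GAB k A B)) by
      simp only [mul_assoc]]
  rw [gab_mapBT hB, mul_one, gab_VU hA, one_mul]

end GABmat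
section GABS

variable {k : Type*} [Field k] {n : ℕ} (A B : Matrix (Fin n) (Fin n) k)

/-- The antipode on generators. -/
noncomputable def GABg : GABgen n → (GAB k A B)ᵐᵒᵖ
  | .u i j => op (GABV A B i j)
  | .D => op (GABDinv k A B)
  | .Dinv => op (GABD k A B)

/-- The antipode on the free algebra. -/
noncomputable def GABF : FreeAlgebra k (GABgen n) →ₐ[k] (GAB k A B)ᵐᵒᵖ :=
  FreeAlgebra.lift k (GABg A B)

variable {A B}

set_option maxHeartbeats 1000000 in
lemma gab_F_rel (hA : IsUnit A) (hB : IsUnit B) :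
    ∀ ⦃x y⦄, GABrel k A B x y → GABF A B x = GABF A B y := by
  intro x y h
  induction h with
  | relA i j =>
      apply unop_injective
      have h7 := congrFun (congrFun (gab_T7 (A := A) (B := B) hA hB) j) i
      simp only [Matrix.mul_apply, Matrix.transpose_apply, Matrix.map_apply,
        Matrix.smul_apply, op_smul_eq_mul, Finset.sum_mul, Finset.mul_sum, mul_assoc] at h7
      simp only [GABF, Matrix.mul_apply, Matrix.transpose_apply, Matrix.map_apply, map_sum,
        _root_.map_mul, GABu, FreeAlgebra.lift_ι_apply, GABg, AlgHom.commutes,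
        MulOpposite.algebraMap_apply, Finset.unop_sum, unop_mul, unop_op,
        Finset.sum_mul, Finset.mul_sum, mul_assoc]
      rw [Finset.sum_comm, ← Algebra.commutes (A i j) (GABDinv k A B)]
      refine Eq.trans ?_ h7
      exact Finset.sum_congr rfl fun y _ => ((Finset.sum_mul _ _ _).trans
        (Finset.sum_congr rfl fun x _ => mul_assoc _ _ _)).symm
  | relB i j =>
      apply unop_injective
      have h8 := congrFun (congrFun (gab_T8 (A := A) (B := B) hA hB) j) i
      simp only [Matrix.mul_apply, Matrix.transpose_apply, Matrix.map_apply,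
        Matrix.smul_apply, op_smul_eq_mul, Finset.sum_mul, Finset.mul_sum, mul_assoc] at h8
      simp only [GABF, Matrix.mul_apply, Matrix.transpose_apply, Matrix.map_apply, map_sum,
        _root_.map_mul, GABu, FreeAlgebra.lift_ι_apply, GABg, AlgHom.commutes,
        MulOpposite.algebraMap_apply, Finset.unop_sum, unop_mul, unop_op,
        Finset.sum_mul, Finset.mul_sum, mul_assoc]
      rw [Finset.sum_comm, ← Algebra.commutes (B i j) (GABDinv k A B)]
      refine Eq.trans ?_ h8
      exact Finset.sum_congr rfl fun y _ => ((Finset.sum_mul _ _ _).trans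
        (Finset.sum_congr rfl fun x _ => mul_assoc _ _ _)).symm
  | relD =>
      simp only [GABF, _root_.map_mul, _root_.map_one, FreeAlgebra.lift_ι_apply, GABg]
      rw [← op_mul, gab_DDinv, op_one]
  | relD' =>
      simp only [GABF, _root_.map_mul, _root_.map_one, FreeAlgebra.lift_ι_apply, GABg]
      rw [← op_mul, gab_DinvD, op_one]

end GABS
/-- The map `S` given on generators by `S(u) = 𝔻⁻¹ A⁻¹ uᵀ A` (entrywise) and
`S(𝔻^{±1}) = 𝔻^{∓1}` extends to a well-defined algebra anti-homomorphism of `G(A,B)`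
(an algebra homomorphism `G(A,B) → G(A,B)ᵐᵒᵖ`), and it satisfies the antipode equations
(with respect to the standard coalgebra structure `Δ(u_{ij}) = Σ_l u_{il} ⊗ u_{lj}`,
`Δ(𝔻^{±1}) = 𝔻^{±1} ⊗ 𝔻^{±1}`, `ε(u_{ij}) = δ_{ij}`, `ε(𝔻^{±1}) = 1`) on the generators,
hence `G(A,B)` is a Hopf algebra with antipode `S`. -/
theorem stmt3 {k : Type*} [Field k] {n : ℕ} (hn : 2 ≤ n)
    (A B : Matrix (Fin n) (Fin n) k) (hA : IsUnit A) (hB : IsUnit B) :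
    ∃ S : GAB k A B →ₐ[k] (GAB k A B)ᵐᵒᵖ,
      -- values on the generators
      (∀ i j, S (GABU k A B i j) =
        MulOpposite.op (GABDinv k A B *
          ((A⁻¹.map (algebraMap k (GAB k A B)) * (GABumat k A B)ᵀ *
              A.map (algebraMap k (GAB k A B))) i j))) ∧
      S (GABD k A B) = MulOpposite.op (GABDinv k A B) ∧
      S (GABDinv k A B) = MulOpposite.op (GABD k A B) ∧
      -- the antipode equations on generators: m ∘ (S ⊗ id) ∘ Δ = η ∘ ε = m ∘ (id ⊗ S) ∘ Δ
      (∀ i j, (∑ l, (S (GABU k A B i l)).unop * GABU k A B l j)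
          = if i = j then 1 else 0) ∧
      (∀ i j, (∑ l, GABU k A B i l * (S (GABU k A B l j)).unop)
          = if i = j then 1 else 0) ∧
      (S (GABD k A B)).unop * GABD k A B = 1 ∧
      GABD k A B * (S (GABD k A B)).unop = 1 ∧
      (S (GABDinv k A B)).unop * GABDinv k A B = 1 ∧
      GABDinv k A B * (S (GABDinv k A B)).unop = 1 := by
  classical
  obtain ⟨S, hS⟩ : ∃ S : GAB k A B →ₐ[k] (GAB k A B)ᵐᵒᵖ,
      ∀ x, S (RingQuot.mkAlgHom k (GABrel k A B) x) = GABF A B x :=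
    ⟨RingQuot.liftAlgHom k ⟨GABF A B, gab_F_rel hA hB⟩, fun x => by
      exact RingQuot.liftAlgHom_mkAlgHom_apply k (GABF A B) (gab_F_rel hA hB) x⟩
  have hu : ∀ i j, S (GABU k A B i j) = op (GABV A B i j) := fun i j => by
    rw [GABU, hS, GABF, FreeAlgebra.lift_ι_apply]; rfl
  have hd : S (GABD k A B) = op (GABDinv k A B) := by
    rw [GABD, hS, GABF, FreeAlgebra.lift_ι_apply]; rfl
  have hd' : S (GABDinv k A B) = op (GABD k A B) := by
    rw [GABDinv, hS, GABF, FreeAlgebra.lift_ι_apply]; rfl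
  refine ⟨S, ?_, hd, hd', ?_, ?_, ?_, ?_, ?_, ?_⟩
  · intro i j
    rw [hu, GABV, Matrix.smul_apply, smul_eq_mul]
  · intro i j
    have h := congrFun (congrFun (gab_VU (A := A) (B := B) hA) i) j
    rw [Matrix.mul_apply] at h
    rw [← Matrix.one_apply (i := i) (j := j), ← h]
    exact Finset.sum_congr rfl fun l _ => by rw [hu]; rfl
  · intro i j
    have h := congrFun (congrFun (gab_UV (A := A) (B := B) hA hB) i) j
    rw [Matrix.mul_apply] at h
    rw [← Matrix.one_apply (i := i) (j := j), ← h]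
    exact Finset.sum_congr rfl fun l _ => by rw [hu]; rfl
  · rw [hd]; exact gab_DinvD A B
  · rw [hd]; exact gab_DDinv A B
  · rw [hd']; exact gab_DDinv A B
  · rw [hd']; exact gab_DinvD A B
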